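/- arXiv:1702.03692 — 5 statements merged into one kernel-verified Lean document; each statement's English description precedes it below -/
import Mathlib

section
/- As c → 0⁺, the function c ↦ ∫₀^∞ e^{−x} · (1 − exp(−c/x²)) dx is asymptotically equivalent to √(π·c); that is, the ratio ∫₀^∞ e^{−x}(1 − e^{−c/x²}) dx / √(π·c) tends to 1 as c tends to 0 from the right. -/
open MeasureTheory Real Filter
open Set Topology


noncomputable def f0 (u : ℝ) : ℝ := 1 - Real.exp (-(u ^ 2)⁻¹)

lemma f0_nonneg (u : ℝ) : 0 ≤ f0 u := by
  have : Real.exp (-(u ^ 2)⁻¹) ≤ 1 := by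
    rw [Real.exp_le_one_iff]
    simp only [Left.neg_nonpos_iff]
    positivity
  simp only [f0]; linarith

lemma f0_le_one (u : ℝ) : f0 u ≤ 1 := by
  have := Real.exp_pos (-(u ^ 2)⁻¹); simp only [f0]; linarith

lemma f0_le_sq (u : ℝ) : f0 u ≤ (u ^ 2)⁻¹ := by
  have h := Real.add_one_le_exp (-(u ^ 2)⁻¹)
  simp only [f0]; linarith

lemma f0_meas : Measurable f0 := by
  unfold f0; fun_prop

lemma f0_integrable : IntegrableOn f0 (Ioi 0) := by
  have h1 : IntegrableOn f0 (Ioc 0 1) := by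
    refine Measure.integrableOn_of_bounded (M := 1) (by simp) f0_meas.aestronglyMeasurable ?_
    filter_upwards with u
    rw [Real.norm_eq_abs, abs_of_nonneg (f0_nonneg u)]
    exact f0_le_one u
  have h2 : IntegrableOn f0 (Ioi 1) := by
    have hint : IntegrableOn (fun u : ℝ => u ^ (-2 : ℝ)) (Ioi 1) :=
      integrableOn_Ioi_rpow_of_lt (by norm_num) one_pos
    refine hint.mono' f0_meas.aestronglyMeasurable ?_
    filter_upwards [ae_restrict_mem measurableSet_Ioi] with u hu
    rw [Real.norm_eq_abs, abs_of_nonneg (f0_nonneg u)]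
    have h1u : (0:ℝ) < u := lt_trans one_pos hu
    calc f0 u ≤ (u ^ 2)⁻¹ := f0_le_sq u
      _ = u ^ (-2 : ℝ) := by
          rw [Real.rpow_neg h1u.le, Real.rpow_two]
  have := h1.union h2
  rwa [Ioc_union_Ioi_eq_Ioi (le_of_lt one_pos)] at this
noncomputable def H (u : ℝ) : ℝ :=
  u * f0 u + Real.sqrt π - 2 * ∫ t in (0:ℝ)..u⁻¹, Real.exp (-t ^ 2)

lemma gauss_cont : Continuous (fun t : ℝ => Real.exp (-t ^ 2)) := by fun_prop

lemma gauss_integrable : Integrable (fun t : ℝ => Real.exp (-t ^ 2)) := by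
  have := integrable_exp_neg_mul_sq (b := 1) one_pos
  simpa using this

lemma gauss_int_Ioi : ∫ t in Ioi (0:ℝ), Real.exp (-t ^ 2) = Real.sqrt π / 2 := by
  have := integral_gaussian_Ioi 1
  simpa using this

lemma Phi_hasDeriv (y : ℝ) :
    HasDerivAt (fun y => ∫ t in (0:ℝ)..y, Real.exp (-t ^ 2)) (Real.exp (-y ^ 2)) y := by
  exact intervalIntegral.integral_hasDerivAt_right
    (gauss_cont.intervalIntegrable _ _)
    (gauss_cont.stronglyMeasurable.stronglyMeasurableAtFilter)
    gauss_cont.continuousAt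

lemma H_hasDeriv {u : ℝ} (hu : 0 < u) : HasDerivAt H (f0 u) u := by
  have hu2 : u ^ 2 ≠ 0 := pow_ne_zero _ hu.ne'
  have hinner : HasDerivAt (fun u : ℝ => -(u ^ 2)⁻¹) (2 * u / (u ^ 2) ^ 2) u := by
    have h1 : HasDerivAt (fun u : ℝ => u ^ 2) (2 * u) u := by
      simpa using hasDerivAt_pow 2 u
    have := (h1.inv hu2).neg
    refine this.congr_deriv ?_
    field_simp
  have hexp : HasDerivAt (fun u : ℝ => Real.exp (-(u ^ 2)⁻¹))
      (Real.exp (-(u ^ 2)⁻¹) * (2 * u / (u ^ 2) ^ 2)) u := hinner.exp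
  have hf0 : HasDerivAt f0 (-(Real.exp (-(u ^ 2)⁻¹) * (2 * u / (u ^ 2) ^ 2))) u := by
    exact (hexp.const_sub 1)
  have h1 : HasDerivAt (fun u => u * f0 u)
      (f0 u + u * -(Real.exp (-(u ^ 2)⁻¹) * (2 * u / (u ^ 2) ^ 2))) u := by
    exact ((hasDerivAt_id' u).mul hf0).congr_deriv (by ring)
  have hinv : HasDerivAt (fun u : ℝ => u⁻¹) (-(u ^ 2)⁻¹) u := hasDerivAt_inv hu.ne'
  have h2 : HasDerivAt (fun u : ℝ => ∫ t in (0:ℝ)..u⁻¹, Real.exp (-t ^ 2))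
      (Real.exp (-(u⁻¹) ^ 2) * -(u ^ 2)⁻¹) u := (Phi_hasDeriv u⁻¹).comp u hinv
  have := (h1.add_const (Real.sqrt π)).sub (h2.const_mul 2)
  refine this.congr_deriv ?_
  rw [← inv_pow]
  field_simp [f0]
  ring

lemma mul_f0_tendsto : Tendsto (fun u => u * f0 u) atTop (𝓝 0) := by
  have h0 : Tendsto (fun u : ℝ => u⁻¹) atTop (𝓝 0) := tendsto_inv_atTop_zero
  refine squeeze_zero' ?_ ?_ h0
  · filter_upwards [eventually_gt_atTop (0:ℝ)] with u hu
    exact mul_nonneg hu.le (f0_nonneg u)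
  · filter_upwards [eventually_gt_atTop (0:ℝ)] with u hu
    calc u * f0 u ≤ u * (u ^ 2)⁻¹ := by
          have := f0_le_sq u
          exact mul_le_mul_of_nonneg_left this hu.le
      _ = u⁻¹ := by field_simp

lemma H_tendsto_top : Tendsto H atTop (𝓝 (Real.sqrt π)) := by
  have h2 : Tendsto (fun u : ℝ => ∫ t in (0:ℝ)..u⁻¹, Real.exp (-t ^ 2)) atTop (𝓝 0) := by
    have hc : ContinuousAt (fun y => ∫ t in (0:ℝ)..y, Real.exp (-t ^ 2)) 0 :=
      (Phi_hasDeriv 0).continuousAt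
    have : Tendsto (fun y => ∫ t in (0:ℝ)..y, Real.exp (-t ^ 2)) (𝓝 0) (𝓝 0) := by
      simpa using hc.tendsto
    exact this.comp tendsto_inv_atTop_zero
  have := (mul_f0_tendsto.add_const (Real.sqrt π)).sub (h2.const_mul 2)
  unfold H; simpa using this

lemma H_tendsto_zero : Tendsto H (𝓝[>] 0) (𝓝 0) := by
  have h1 : Tendsto (fun u => u * f0 u) (𝓝[>] (0:ℝ)) (𝓝 0) := by
    refine squeeze_zero' ?_ ?_ (tendsto_id.mono_left nhdsWithin_le_nhds)
    · filter_upwards [self_mem_nhdsWithin] with u hu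
      exact mul_nonneg (le_of_lt hu) (f0_nonneg u)
    · filter_upwards [self_mem_nhdsWithin] with u hu
      calc u * f0 u ≤ u * 1 := mul_le_mul_of_nonneg_left (f0_le_one u) (le_of_lt hu)
        _ = u := mul_one u
  have h2 : Tendsto (fun u : ℝ => ∫ t in (0:ℝ)..u⁻¹, Real.exp (-t ^ 2)) (𝓝[>] 0)
      (𝓝 (Real.sqrt π / 2)) := by
    have := intervalIntegral_tendsto_integral_Ioi (a := 0)
      (f := fun t => Real.exp (-t ^ 2)) (b := fun u : ℝ => u⁻¹) (l := 𝓝[>] 0)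
      gauss_integrable.integrableOn tendsto_inv_nhdsGT_zero
    rwa [gauss_int_Ioi] at this
  have := (h1.add_const (Real.sqrt π)).sub (h2.const_mul 2)
  have h3 : Real.sqrt π - 2 * (Real.sqrt π / 2) = 0 := by ring
  unfold H; simpa [h3] using this
lemma int_Ioi_eps {ε : ℝ} (hε : 0 < ε) :
    ∫ u in Ioi ε, f0 u = Real.sqrt π - H ε := by
  refine integral_Ioi_of_hasDerivAt_of_tendsto ?_ (fun x hx => H_hasDeriv (hε.trans hx))
    (f0_integrable.mono_set (Ioi_subset_Ioi hε.le)) H_tendsto_top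
  exact (H_hasDeriv hε).continuousAt.continuousWithinAt

lemma int_f0 : ∫ u in Ioi (0:ℝ), f0 u = Real.sqrt π := by
  have key : Tendsto (fun ε => ∫ u in Ioi ε, f0 u) (𝓝[>] (0:ℝ))
      (𝓝 (∫ u in Ioi (0:ℝ), f0 u)) := by
    have hsplit : ∀ ε ∈ Ioi (0:ℝ), (∫ u in Ioi (0:ℝ), f0 u) - ∫ u in Ioi ε, f0 u
        = ∫ u in Ioc 0 ε, f0 u := by
      intro ε hε
      have : (∫ u in Ioc 0 ε, f0 u) + ∫ u in Ioi ε, f0 u = ∫ u in Ioi (0:ℝ), f0 u := by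
        rw [← setIntegral_union (Ioc_disjoint_Ioi le_rfl) measurableSet_Ioi
          (f0_integrable.mono_set Ioc_subset_Ioi_self)
          (f0_integrable.mono_set (Ioi_subset_Ioi (le_of_lt hε))),
          Ioc_union_Ioi_eq_Ioi (le_of_lt hε)]
      linarith
    have hsmall : Tendsto (fun ε => ∫ u in Ioc (0:ℝ) ε, f0 u) (𝓝[>] (0:ℝ)) (𝓝 0) := by
      refine squeeze_zero' ?_ ?_ (tendsto_id.mono_left nhdsWithin_le_nhds)
      · filter_upwards [self_mem_nhdsWithin] with ε hε
        exact setIntegral_nonneg measurableSet_Ioc (fun u _ => f0_nonneg u)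
      · filter_upwards [self_mem_nhdsWithin] with ε hε
        have : ∫ u in Ioc (0:ℝ) ε, f0 u ≤ ∫ u in Ioc (0:ℝ) ε, (1:ℝ) := by
          refine setIntegral_mono_on (f0_integrable.mono_set Ioc_subset_Ioi_self)
            (integrableOn_const (by simp)) measurableSet_Ioc
            (fun u _ => f0_le_one u)
        simpa [ENNReal.toReal_ofReal (le_of_lt hε), max_eq_left (show (0:ℝ) ≤ ε from le_of_lt hε)] using this
    have : Tendsto (fun ε => (∫ u in Ioi (0:ℝ), f0 u) - ∫ u in Ioc (0:ℝ) ε, f0 u)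
        (𝓝[>] (0:ℝ)) (𝓝 (∫ u in Ioi (0:ℝ), f0 u)) := by
      simpa using (tendsto_const_nhds.sub hsmall)
    refine this.congr' ?_
    filter_upwards [self_mem_nhdsWithin] with ε hε
    have := hsplit ε hε; linarith
  have key2 : Tendsto (fun ε => ∫ u in Ioi ε, f0 u) (𝓝[>] (0:ℝ)) (𝓝 (Real.sqrt π)) := by
    have : Tendsto (fun ε => Real.sqrt π - H ε) (𝓝[>] (0:ℝ)) (𝓝 (Real.sqrt π)) := by
      simpa using (tendsto_const_nhds.sub H_tendsto_zero)
    refine this.congr' ?_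
    filter_upwards [self_mem_nhdsWithin] with ε hε
    exact (int_Ioi_eps hε).symm
  exact tendsto_nhds_unique key key2
lemma J_tendsto : Tendsto (fun c : ℝ => ∫ u in Set.Ioi (0:ℝ),
      Real.exp (-(Real.sqrt c * u)) * f0 u) (𝓝[>] 0) (𝓝 (Real.sqrt π)) := by
  rw [← int_f0]
  refine tendsto_integral_filter_of_dominated_convergence f0 ?_ ?_ f0_integrable ?_
  · filter_upwards with c
    exact ((Real.measurable_exp.comp ((measurable_const.mul measurable_id).neg)).mul
      f0_meas).aestronglyMeasurable
  · filter_upwards [self_mem_nhdsWithin] with c hc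
    filter_upwards [ae_restrict_mem measurableSet_Ioi] with u hu
    rw [Real.norm_eq_abs, abs_of_nonneg (mul_nonneg (Real.exp_pos _).le (f0_nonneg u))]
    calc Real.exp (-(Real.sqrt c * u)) * f0 u ≤ 1 * f0 u := by
          refine mul_le_mul_of_nonneg_right ?_ (f0_nonneg u)
          rw [Real.exp_le_one_iff]
          simp only [Left.neg_nonpos_iff]
          exact mul_nonneg (Real.sqrt_nonneg c) (le_of_lt hu)
      _ = f0 u := one_mul _
  · filter_upwards [ae_restrict_mem measurableSet_Ioi] with u hu
    have h1 : Tendsto (fun c : ℝ => Real.sqrt c) (𝓝[>] 0) (𝓝 0) := by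
      have := (Real.continuous_sqrt.tendsto 0)
      simpa using this.mono_left nhdsWithin_le_nhds
    have : Tendsto (fun c : ℝ => Real.exp (-(Real.sqrt c * u))) (𝓝[>] 0) (𝓝 1) := by
      have := ((h1.mul_const u).neg).rexp
      simpa using this
    simpa using this.mul_const (f0 u)


/-- As `c → 0⁺`, `∫₀^∞ e^{−x}·(1 − exp(−c/x²)) dx` is asymptotically equivalent to
`√(π·c)`: the ratio tends to `1` as `c → 0⁺`. -/
theorem integral_exp_one_sub_exp_asymptotic :
    Tendsto (fun c : ℝ =>
        (∫ x in Set.Ioi (0 : ℝ), Real.exp (-x) * (1 - Real.exp (-(c / x ^ 2)))) /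
          Real.sqrt (π * c))
      (nhdsWithin 0 (Set.Ioi 0)) (nhds 1) := by
  have hπ : (0:ℝ) < Real.sqrt π := Real.sqrt_pos.mpr pi_pos
  have main : Tendsto (fun c : ℝ => (∫ u in Set.Ioi (0:ℝ),
      Real.exp (-(Real.sqrt c * u)) * f0 u) / Real.sqrt π) (𝓝[>] 0) (𝓝 1) := by
    have := J_tendsto.div_const (Real.sqrt π)
    rwa [div_self hπ.ne'] at this
  refine main.congr' ?_
  filter_upwards [self_mem_nhdsWithin] with c hc
  have hc' : (0:ℝ) < c := hc
  set s := Real.sqrt c with hs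
  have hs0 : 0 < s := Real.sqrt_pos.mpr hc'
  have hs2 : s ^ 2 = c := Real.sq_sqrt hc'.le
  have key : ∫ u in Set.Ioi (0:ℝ), Real.exp (-(s * u)) * f0 u
      = s⁻¹ * ∫ x in Set.Ioi (0:ℝ), Real.exp (-x) * (1 - Real.exp (-(c / x ^ 2))) := by
    have := integral_comp_mul_left_Ioi
      (fun x => Real.exp (-x) * (1 - Real.exp (-(c / x ^ 2)))) 0 hs0
    rw [mul_zero, smul_eq_mul] at this
    rw [← this]
    refine setIntegral_congr_fun measurableSet_Ioi (fun u hu => ?_)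
    have hu0 : (0:ℝ) < u := hu
    have : c / (s * u) ^ 2 = (u ^ 2)⁻¹ := by
      rw [mul_pow, hs2]
      field_simp
    simp only [this, f0]
  rw [key]
  have hsqrt : Real.sqrt (π * c) = Real.sqrt π * s := by
    rw [hs, Real.sqrt_mul pi_pos.le]
  rw [hsqrt, inv_mul_eq_div, div_div, mul_comm s (Real.sqrt π)]
end

section
/- Let X and Y be independent random variables, X exponentially distributed with mean λ_sr > 0 and Y exponentially distributed with mean λ_rd > 0, and let γ_th > 0 be fixed. Then, as b̂ → ∞, the asymptotic outage probability satisfies P( b̂·X²·Y ≤ γ_th ) ∼ (1/λ_sr) · √( π·γ_th / (b̂·λ_rd) ); that is, the ratio of the two sides tends to 1 as b̂ → ∞. -/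
open MeasureTheory ProbabilityTheory Real Filter Set

namespace AsymptoticOutageAux

lemma expMeasure_Iio_zero {r : ℝ} : expMeasure r (Iio 0) = 0 := by
  rw [expMeasure, gammaMeasure, withDensity_apply _ measurableSet_Iio]
  exact lintegral_gammaPDF_of_nonpos le_rfl

lemma expMeasure_Iic' {r : ℝ} (hr : 0 < r) {t : ℝ} (ht : 0 ≤ t) :
    expMeasure r (Iic t) = ENNReal.ofReal (1 - Real.exp (-(r * t))) := by
  rw [expMeasure, gammaMeasure, withDensity_apply _ measurableSet_Iic]
  have h := lintegral_exponentialPDF_eq_antiDeriv hr t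
  rw [if_pos ht] at h
  exact h

lemma slice_eq {a b y γth : ℝ} (ha : 0 < a) (hb : 0 < b) (hy : 0 < y) (hγth : 0 < γth) :
    expMeasure a {x : ℝ | b * x ^ 2 * y ≤ γth}
      = ENNReal.ofReal (1 - Real.exp (-(a * Real.sqrt (γth / (b * y))))) := by
  set t := Real.sqrt (γth / (b * y)) with ht_def
  have hby : 0 < b * y := mul_pos hb hy
  have ht : 0 < t := Real.sqrt_pos.2 (div_pos hγth hby)
  have hae : {x : ℝ | b * x ^ 2 * y ≤ γth} =ᵐ[expMeasure a] Iic t := by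
    have h0 : ∀ᵐ x ∂(expMeasure a), x ∈ Ici (0:ℝ) := by
      rw [ae_iff]
      simp only [mem_Ici, not_le]; exact expMeasure_Iio_zero (r := a)
    filter_upwards [h0] with x hx
    have hx0 : (0:ℝ) ≤ x := hx
    show (b * x ^ 2 * y ≤ γth) = (x ≤ t)
    rw [eq_iff_iff]
    rw [ht_def, Real.le_sqrt hx0 (div_pos hγth hby).le, le_div_iff₀ hby]
    constructor <;> intro h <;> nlinarith
  rw [measure_congr hae, expMeasure_Iic' ha ht.le]

lemma F_nonneg {a r b y γth : ℝ} (hr : 0 < r) (ha : 0 ≤ a) :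
    0 ≤ (1 - Real.exp (-(a * Real.sqrt (γth / (b * y))))) * (r * Real.exp (-(r * y))) := by
  have h1 : Real.exp (-(a * Real.sqrt (γth / (b * y)))) ≤ 1 := by
    rw [Real.exp_le_one_iff]
    have := Real.sqrt_nonneg (γth / (b * y))
    nlinarith
  apply mul_nonneg (by linarith) (by positivity)

lemma outage_eq {a r b γth : ℝ} (ha : 0 < a) (hr : 0 < r) (hb : 0 < b) (hγth : 0 < γth) :
    (((expMeasure a).prod (expMeasure r)) {p : ℝ × ℝ | b * p.1 ^ 2 * p.2 ≤ γth}).toReal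
      = ∫ y in Ioi 0,
          (1 - Real.exp (-(a * Real.sqrt (γth / (b * y))))) * (r * Real.exp (-(r * y))) := by
  haveI : IsProbabilityMeasure (expMeasure a) := isProbabilityMeasure_expMeasure ha
  haveI : IsProbabilityMeasure (expMeasure r) := isProbabilityMeasure_expMeasure hr
  have hT : MeasurableSet {p : ℝ × ℝ | b * p.1 ^ 2 * p.2 ≤ γth} := by
    apply measurableSet_le
    · exact ((measurable_fst.pow_const 2).const_mul b).mul measurable_snd
    · exact measurable_const
  rw [Measure.prod_apply_symm hT]
  have hslice_meas : Measurable fun y : ℝ =>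
      expMeasure a ((fun x => (x, y)) ⁻¹' {p : ℝ × ℝ | b * p.1 ^ 2 * p.2 ≤ γth}) :=
    measurable_measure_prodMk_right hT
  have hwd : expMeasure r = volume.withDensity (gammaPDF 1 r) := rfl
  rw [hwd, lintegral_withDensity_eq_lintegral_mul _ (f := gammaPDF 1 r)
    ((measurable_gammaPDFReal 1 r).ennreal_ofReal) hslice_meas]
  have key : (fun y : ℝ => (gammaPDF 1 r * fun y =>
        expMeasure a ((fun x => (x, y)) ⁻¹' {p : ℝ × ℝ | b * p.1 ^ 2 * p.2 ≤ γth})) y)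
      =ᵐ[volume] (Ioi (0:ℝ)).indicator (fun y => ENNReal.ofReal
          ((1 - Real.exp (-(a * Real.sqrt (γth / (b * y))))) * (r * Real.exp (-(r * y))))) := by
    have h0 : ∀ᵐ y : ℝ, y ≠ 0 := by
      rw [ae_iff]
      simp only [ne_eq, not_not, setOf_eq_eq_singleton]
      exact Real.volume_singleton
    filter_upwards [h0] with y hy
    rcases lt_or_gt_of_ne hy with hneg | hpos
    · have hpdf : gammaPDF 1 r y = 0 := gammaPDF_of_neg hneg
      simp [hpdf, indicator_of_notMem (notMem_Ioi.2 hneg.le)]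
    · have hpre : (fun x => (x, y)) ⁻¹' {p : ℝ × ℝ | b * p.1 ^ 2 * p.2 ≤ γth}
          = {x : ℝ | b * x ^ 2 * y ≤ γth} := rfl
      rw [Set.indicator_of_mem (show y ∈ Ioi (0:ℝ) from hpos)]
      simp only [Pi.mul_apply, hpre, slice_eq ha hb hpos hγth]
      rw [gammaPDF]
      have hpdfval : gammaPDFReal 1 r y = r * Real.exp (-(r * y)) := by
        rw [gammaPDFReal, if_pos hpos.le]
        simp [Real.Gamma_one]
      rw [hpdfval, ← ENNReal.ofReal_mul (by positivity), mul_comm]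
  rw [lintegral_congr_ae key, lintegral_indicator measurableSet_Ioi]
  rw [integral_eq_lintegral_of_nonneg_ae]
  · exact ae_of_all _ fun y => F_nonneg hr ha.le
  · apply Measurable.aestronglyMeasurable
    have hs : Measurable fun y : ℝ => Real.sqrt (γth / (b * y)) :=
      Real.continuous_sqrt.measurable.comp (measurable_const.div (measurable_id.const_mul b))
    exact (measurable_const.sub ((hs.const_mul a).neg.exp)).mul
      (((measurable_id.const_mul r).neg.exp).const_mul r)

lemma int_L {r : ℝ} (hr : 0 < r) :
    ∫ y in Ioi (0:ℝ), (Real.sqrt y)⁻¹ * (r * Real.exp (-(r * y)) / Real.sqrt (π * r)) = 1 := by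
  have h2 : ∀ y ∈ Ioi (0:ℝ), (Real.sqrt y)⁻¹ * (r * Real.exp (-(r * y)) / Real.sqrt (π * r))
      = (y ^ ((1/2:ℝ) - 1) * Real.exp (-(r * y))) * (r / Real.sqrt (π * r)) := by
    intro y hy
    have hy0 : (0:ℝ) < y := hy
    have : y ^ ((1/2:ℝ) - 1) = (Real.sqrt y)⁻¹ := by
      rw [show (1/2:ℝ) - 1 = -(1/2) by norm_num, Real.rpow_neg hy0.le, Real.sqrt_eq_rpow]
    rw [this]; ring
  rw [setIntegral_congr_fun measurableSet_Ioi h2, integral_mul_const,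
    integral_rpow_mul_exp_neg_mul_Ioi one_half_pos hr]
  have hπ : (0:ℝ) < Real.sqrt π := Real.sqrt_pos.2 pi_pos
  have hsr : (0:ℝ) < Real.sqrt r := Real.sqrt_pos.2 hr
  rw [show (1/2 : ℝ) = ((1:ℝ)/2) by norm_num, ← Real.sqrt_eq_rpow, Real.Gamma_one_half_eq,
    Real.sqrt_mul pi_pos.le, one_div, Real.sqrt_inv]
  calc (Real.sqrt r)⁻¹ * Real.sqrt π * (r / (Real.sqrt π * Real.sqrt r))
      = r / (Real.sqrt r * Real.sqrt r) * (Real.sqrt π / Real.sqrt π) := by ring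
    _ = 1 := by rw [Real.mul_self_sqrt hr.le, div_self hπ.ne', div_self hr.ne', one_mul]

lemma tendsto_psi (s : ℝ) :
    Tendsto (fun c : ℝ => (1 - Real.exp (-(c * s))) / c) (nhdsWithin 0 (Ioi 0)) (nhds s) := by
  have hf : HasDerivAt (fun c : ℝ => 1 - Real.exp (-(c * s))) s 0 := by
    have h := (((hasDerivAt_id (0:ℝ)).const_mul (-s)).exp).const_sub 1
    simp only [id_eq] at h
    have heq : (fun c : ℝ => 1 - Real.exp (-s * c)) = fun c : ℝ => 1 - Real.exp (-(c * s)) := by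
      funext c; ring_nf
    rw [heq] at h
    exact h.congr_deriv (by simp)
  have h1 : Tendsto (slope (fun c : ℝ => 1 - Real.exp (-(c * s))) 0)
      (nhdsWithin 0 (Ioi 0)) (nhds s) :=
    (hasDerivAt_iff_tendsto_slope.1 hf).mono_left
      (nhdsWithin_mono 0 (fun x hx => ne_of_gt hx))
  refine h1.congr fun c => ?_
  simp only [slope_def_field]
  simp [div_eq_div_iff]

end AsymptoticOutageAux

open AsymptoticOutageAux

/-- For independent exponential `X` (mean `λ_sr`) and `Y` (mean `λ_rd`) and fixed
`γ_th > 0`, as `b̂ → ∞`, `P(b̂·X²·Y ≤ γ_th) ∼ (1/λ_sr)·√(π·γ_th/(b̂·λ_rd))`; that is, the ratio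
of the two sides tends to `1`. -/
theorem asymptotic_outage_equiv
    {Ω : Type*} [MeasurableSpace Ω] (P : Measure Ω) [IsProbabilityMeasure P]
    (X Y : Ω → ℝ) (hX : Measurable X) (hY : Measurable Y)
    (hXY : IndepFun X Y P)
    (lsr lrd : ℝ) (hlsr : 0 < lsr) (hlrd : 0 < lrd)
    (hXd : Measure.map X P = expMeasure lsr⁻¹)
    (hYd : Measure.map Y P = expMeasure lrd⁻¹)
    (γth : ℝ) (hγth : 0 < γth) :
    Tendsto (fun b : ℝ =>
        (P {ω | b * X ω ^ 2 * Y ω ≤ γth}).toReal /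
          ((1 / lsr) * Real.sqrt (π * γth / (b * lrd))))
      atTop (nhds 1) := by
  set a := lsr⁻¹ with ha_def
  set r := lrd⁻¹ with hr_def
  have ha : 0 < a := inv_pos.2 hlsr
  have hr : 0 < r := inv_pos.2 hlrd
  -- notation
  set F : ℝ → ℝ → ℝ := fun b y =>
    (1 - Real.exp (-(a * Real.sqrt (γth / (b * y))))) * (r * Real.exp (-(r * y))) with hF_def
  set D : ℝ → ℝ := fun b => (1 / lsr) * Real.sqrt (π * γth / (b * lrd)) with hD_def
  set c : ℝ → ℝ := fun b => a * Real.sqrt (γth / b) with hc_def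
  set K : ℝ → ℝ := fun y => r * Real.exp (-(r * y)) / Real.sqrt (π * r) with hK_def
  set L : ℝ → ℝ := fun y => (Real.sqrt y)⁻¹ * K y with hL_def
  have hπr : (0:ℝ) < Real.sqrt (π * r) := Real.sqrt_pos.2 (mul_pos pi_pos hr)
  -- key algebra facts for b > 0
  have hc_pos : ∀ b : ℝ, 0 < b → 0 < c b := fun b hb =>
    mul_pos ha (Real.sqrt_pos.2 (div_pos hγth hb))
  have hD_eq : ∀ b : ℝ, 0 < b → D b = c b * Real.sqrt (π * r) := by
    intro b hb
    have h1 : π * γth / (b * lrd) = (γth / b) * (π * r) := by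
      field_simp [hr_def]
      rw [hr_def, mul_inv_cancel₀ hlrd.ne']
    show (1 / lsr) * Real.sqrt (π * γth / (b * lrd)) = (a * Real.sqrt (γth / b)) * Real.sqrt (π * r)
    rw [h1, Real.sqrt_mul (div_pos hγth hb).le, one_div]
    ring
  have harg_eq : ∀ b y : ℝ, 0 < b → 0 < y →
      a * Real.sqrt (γth / (b * y)) = c b * (Real.sqrt y)⁻¹ := by
    intro b y hb hy
    have h1 : γth / (b * y) = (γth / b) * y⁻¹ := by field_simp
    rw [h1, Real.sqrt_mul (div_pos hγth hb).le, Real.sqrt_inv, hc_def]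
    ring
  have hG_eq : ∀ b y : ℝ, 0 < b → 0 < y →
      F b y / D b = (1 - Real.exp (-(c b * (Real.sqrt y)⁻¹))) / c b * K y := by
    intro b y hb hy
    show (1 - Real.exp (-(a * Real.sqrt (γth / (b * y))))) * (r * Real.exp (-(r * y))) / D b
      = (1 - Real.exp (-(c b * (Real.sqrt y)⁻¹))) / c b *
        (r * Real.exp (-(r * y)) / Real.sqrt (π * r))
    rw [harg_eq b y hb hy, hD_eq b hb]
    have hcb := hc_pos b hb
    field_simp
  -- probability formula
  have hN : ∀ b : ℝ, 0 < b →
      (P {ω | b * X ω ^ 2 * Y ω ≤ γth}).toReal = ∫ y in Ioi 0, F b y := by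
    intro b hb
    have hmap : Measure.map (fun ω => (X ω, Y ω)) P = (expMeasure a).prod (expMeasure r) := by
      rw [← hXd, ← hYd]
      exact (indepFun_iff_map_prod_eq_prod_map_map hX.aemeasurable hY.aemeasurable).1 hXY
    have hT : MeasurableSet {p : ℝ × ℝ | b * p.1 ^ 2 * p.2 ≤ γth} := by
      apply measurableSet_le
      · exact ((measurable_fst.pow_const 2).const_mul b).mul measurable_snd
      · exact measurable_const
    have h1 : P {ω | b * X ω ^ 2 * Y ω ≤ γth}
        = ((expMeasure a).prod (expMeasure r)) {p : ℝ × ℝ | b * p.1 ^ 2 * p.2 ≤ γth} := by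
      rw [← hmap, Measure.map_apply (hX.prodMk hY) hT]
      rfl
    rw [h1, outage_eq ha hr hb hγth]
  -- the three DCT hypotheses
  have hL_integrable : IntegrableOn L (Ioi (0:ℝ)) := by
    have hbase : IntegrableOn
        (fun y : ℝ => y ^ (-(1/2) : ℝ) * Real.exp (-r * y ^ (1:ℝ))) (Ioi 0) :=
      integrableOn_rpow_mul_exp_neg_mul_rpow (by norm_num) one_pos hr
    have : IntegrableOn
        (fun y : ℝ => (y ^ (-(1/2) : ℝ) * Real.exp (-r * y ^ (1:ℝ))) * (r / Real.sqrt (π * r)))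
        (Ioi 0) := hbase.mul_const _
    apply this.congr_fun _ measurableSet_Ioi
    intro y hy
    have hy0 : (0:ℝ) < y := hy
    show y ^ (-(1/2) : ℝ) * Real.exp (-r * y ^ (1:ℝ)) * (r / Real.sqrt (π * r))
      = (Real.sqrt y)⁻¹ * (r * Real.exp (-(r * y)) / Real.sqrt (π * r))
    rw [Real.rpow_one, Real.rpow_neg hy0.le, ← Real.sqrt_eq_rpow]
    ring_nf
  have hmeas : ∀ b : ℝ, AEStronglyMeasurable (fun y => F b y / D b)
      (volume.restrict (Ioi (0:ℝ))) := by
    intro b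
    apply Measurable.aestronglyMeasurable
    have hs : Measurable fun y : ℝ => Real.sqrt (γth / (b * y)) :=
      Real.continuous_sqrt.measurable.comp (measurable_const.div (measurable_id.const_mul b))
    exact ((measurable_const.sub ((hs.const_mul a).neg.exp)).mul
      (((measurable_id.const_mul r).neg.exp).const_mul r)).div_const _
  have hbound : ∀ᶠ b in atTop, ∀ᵐ y ∂(volume.restrict (Ioi (0:ℝ))), ‖F b y / D b‖ ≤ L y := by
    filter_upwards [eventually_gt_atTop (0:ℝ)] with b hb
    rw [ae_restrict_iff' measurableSet_Ioi]
    apply ae_of_all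
    intro y hy
    have hy0 : (0:ℝ) < y := hy
    have hcb := hc_pos b hb
    have hsy : (0:ℝ) < (Real.sqrt y)⁻¹ := inv_pos.2 (Real.sqrt_pos.2 hy0)
    have hK_nonneg : 0 ≤ K y := by
      show 0 ≤ r * Real.exp (-(r * y)) / Real.sqrt (π * r)
      positivity
    rw [hG_eq b y hb hy0]
    have hpsi_nonneg : 0 ≤ (1 - Real.exp (-(c b * (Real.sqrt y)⁻¹))) / c b := by
      apply div_nonneg _ hcb.le
      have : Real.exp (-(c b * (Real.sqrt y)⁻¹)) ≤ 1 := by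
        rw [Real.exp_le_one_iff]; nlinarith
      linarith
    have hpsi_le : (1 - Real.exp (-(c b * (Real.sqrt y)⁻¹))) / c b ≤ (Real.sqrt y)⁻¹ := by
      rw [div_le_iff₀ hcb]
      have := Real.add_one_le_exp (-(c b * (Real.sqrt y)⁻¹))
      nlinarith
    rw [Real.norm_eq_abs, abs_of_nonneg (mul_nonneg hpsi_nonneg hK_nonneg)]
    exact mul_le_mul_of_nonneg_right hpsi_le hK_nonneg
  have hlim : ∀ᵐ y ∂(volume.restrict (Ioi (0:ℝ))),
      Tendsto (fun b => F b y / D b) atTop (nhds (L y)) := by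
    rw [ae_restrict_iff' measurableSet_Ioi]
    apply ae_of_all
    intro y hy
    have hy0 : (0:ℝ) < y := hy
    have hc_tendsto : Tendsto c atTop (nhdsWithin 0 (Ioi 0)) := by
      rw [tendsto_nhdsWithin_iff]
      constructor
      · have h1 : Tendsto (fun b : ℝ => γth / b) atTop (nhds 0) :=
          tendsto_const_nhds.div_atTop tendsto_id
        have h2 : Tendsto (fun b : ℝ => Real.sqrt (γth / b)) atTop (nhds 0) := by
          have := (Real.continuous_sqrt.tendsto 0).comp h1
          simpa [Function.comp_def] using this
        have := h2.const_mul a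
        simpa using this
      · filter_upwards [eventually_gt_atTop (0:ℝ)] with b hb
        exact hc_pos b hb
    have hpsi := (tendsto_psi ((Real.sqrt y)⁻¹)).comp hc_tendsto
    have hmul := hpsi.mul_const (K y)
    refine Tendsto.congr' ?_ hmul
    filter_upwards [eventually_gt_atTop (0:ℝ)] with b hb
    rw [hG_eq b y hb hy0]
    rfl
  have hDCT := tendsto_integral_filter_of_dominated_convergence
    (μ := volume.restrict (Ioi (0:ℝ))) (F := fun b y => F b y / D b) (f := L) L
    (Eventually.of_forall hmeas) hbound hL_integrable hlim
  have hint : ∫ y in Ioi (0:ℝ), L y = 1 := int_L hr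
  rw [hint] at hDCT
  refine Tendsto.congr' ?_ hDCT
  filter_upwards [eventually_gt_atTop (0:ℝ)] with b hb
  rw [hN b hb, ← integral_div]
end

section
/- Let X and Y be independent random variables, X exponentially distributed with mean λ_sr > 0 and Y exponentially distributed with mean λ_rd > 0, and fix γ_th > 0. Then the diversity order of the noncoherent SWIPT relay system in the high-first-hop-SNR regime equals 1/2: lim_{b̂ → ∞} ( − log P( b̂·X²·Y ≤ γ_th ) / log b̂ ) = 1/2. -/
open MeasureTheory ProbabilityTheory Real Filter

section Helpers

open Set
open scoped ENNReal NNReal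

private lemma expMeasure_eq' (r : ℝ) : expMeasure r = volume.withDensity (exponentialPDF r) := rfl

private lemma expMeasure_Iic' {r : ℝ} (hr : 0 < r) (x : ℝ) :
    expMeasure r (Iic x) = ENNReal.ofReal (if 0 ≤ x then 1 - Real.exp (-(r * x)) else 0) := by
  rw [expMeasure_eq', withDensity_apply _ measurableSet_Iic,
    lintegral_exponentialPDF_eq_antiDeriv hr x]

private lemma expMeasure_Iio_zero (r : ℝ) : expMeasure r (Iio 0) = 0 := by
  rw [expMeasure_eq', withDensity_apply _ measurableSet_Iio,
    lintegral_exponentialPDF_of_nonpos le_rfl]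

private lemma one_sub_exp_neg_le {s : ℝ} : 1 - Real.exp (-s) ≤ s := by
  have := Real.add_one_le_exp (-s); linarith

private lemma one_sub_exp_neg_nonneg {s : ℝ} (hs : 0 ≤ s) : 0 ≤ 1 - Real.exp (-s) := by
  have : Real.exp (-s) ≤ 1 := Real.exp_le_one_iff.mpr (by linarith)
  linarith

private lemma le_one_sub_exp_neg {s : ℝ} (h0 : 0 ≤ s) (h1 : s ≤ 1) :
    Real.exp (-1) * s ≤ 1 - Real.exp (-s) := by
  have h2 : Real.exp (-s) * (s + 1) ≤ 1 := by
    calc Real.exp (-s) * (s + 1) ≤ Real.exp (-s) * Real.exp s :=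
          mul_le_mul_of_nonneg_left (Real.add_one_le_exp s) (Real.exp_pos _).le
      _ = 1 := by rw [← Real.exp_add]; simp
  have h3 : Real.exp (-1) ≤ Real.exp (-s) := Real.exp_le_exp.mpr (by linarith)
  nlinarith [Real.exp_pos (-s)]

private lemma lint_inv_sq {a c : ℝ} (ha : 0 < a) (hc : 0 ≤ c) :
    ∫⁻ x in Ioi a, ENNReal.ofReal (c / x ^ 2) = ENNReal.ofReal (c / a) := by
  have key : ∀ x ∈ Ioi a, x ^ (-2 : ℝ) = (x ^ 2)⁻¹ := by
    intro x hx
    have hx0 : 0 < x := ha.trans hx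
    rw [show (-2:ℝ) = -((2:ℕ):ℝ) by norm_num, Real.rpow_neg hx0.le, Real.rpow_natCast]
  have h1 : ∀ x ∈ Ioi a, ENNReal.ofReal (c / x ^ 2)
      = ENNReal.ofReal c * ENNReal.ofReal ((x ^ 2)⁻¹) := by
    intro x hx
    rw [← ENNReal.ofReal_mul hc, div_eq_mul_inv]
  rw [setLIntegral_congr_fun measurableSet_Ioi h1,
    lintegral_const_mul _ (by fun_prop : Measurable fun x : ℝ => ENNReal.ofReal (x ^ 2)⁻¹)]
  have hint : IntegrableOn (fun x : ℝ => (x ^ 2)⁻¹) (Ioi a) :=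
    (integrableOn_Ioi_rpow_of_lt (by norm_num) ha).congr_fun key measurableSet_Ioi
  have hnn : 0 ≤ᵐ[volume.restrict (Ioi a)] fun x : ℝ => (x ^ 2)⁻¹ :=
    (ae_restrict_iff' measurableSet_Ioi).mpr
      (Filter.Eventually.of_forall fun x _ => by positivity)
  rw [← ofReal_integral_eq_lintegral_ofReal hint hnn]
  have : ∫ x in Ioi a, (x ^ 2)⁻¹ = ∫ x in Ioi a, x ^ (-2:ℝ) :=
    setIntegral_congr_fun measurableSet_Ioi fun x hx => (key x hx).symm
  rw [this, integral_Ioi_rpow_of_lt (by norm_num) ha, ← ENNReal.ofReal_mul hc]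
  congr 1
  rw [show (-2:ℝ) + 1 = -1 by norm_num, Real.rpow_neg_one]
  field_simp

private lemma measurableSet_S (t : ℝ) : MeasurableSet {p : ℝ × ℝ | p.1 ^ 2 * p.2 ≤ t} :=
  measurableSet_le (by fun_prop) measurable_const

private lemma prod_upper {r₁ r₂ t : ℝ} (h1 : 0 < r₁) (h2 : 0 < r₂) (ht : 0 < t) :
    (expMeasure r₁).prod (expMeasure r₂) {p : ℝ × ℝ | p.1 ^ 2 * p.2 ≤ t}
      ≤ ENNReal.ofReal (2 * (r₁ * Real.sqrt (r₂ * t))) := by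
  haveI : IsProbabilityMeasure (expMeasure r₂) := isProbabilityMeasure_expMeasure h2
  set a : ℝ := Real.sqrt (r₂ * t) with ha_def
  have ha : 0 < a := Real.sqrt_pos.mpr (by positivity)
  have ha2 : a ^ 2 = r₂ * t := Real.sq_sqrt (by positivity)
  set g : ℝ → ℝ≥0∞ := fun x => expMeasure r₂ (Prod.mk x ⁻¹' {p : ℝ × ℝ | p.1 ^ 2 * p.2 ≤ t})
    with hg_def
  rw [Measure.prod_apply (measurableSet_S t)]
  have hupper1 : ∫⁻ x in Iic a, g x ∂(expMeasure r₁) ≤ ENNReal.ofReal (r₁ * a) := by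
    calc ∫⁻ x in Iic a, g x ∂(expMeasure r₁) ≤ ∫⁻ _x in Iic a, 1 ∂(expMeasure r₁) :=
          lintegral_mono fun x => prob_le_one
      _ = expMeasure r₁ (Iic a) := by simp
      _ ≤ ENNReal.ofReal (r₁ * a) := by
          rw [expMeasure_Iic' h1, if_pos ha.le]
          exact ENNReal.ofReal_le_ofReal one_sub_exp_neg_le
  have hupper2 : ∫⁻ x in Ioi a, g x ∂(expMeasure r₁) ≤ ENNReal.ofReal (r₁ * a) := by
    have hb : ∀ x ∈ Ioi a, g x ≤ ENNReal.ofReal (r₂ * t / x ^ 2) := by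
      intro x hx
      have hx0 : 0 < x := ha.trans hx
      have hset : Prod.mk x ⁻¹' {p : ℝ × ℝ | p.1 ^ 2 * p.2 ≤ t} = Iic (t / x ^ 2) := by
        ext y
        simp only [Set.mem_preimage, Set.mem_setOf_eq, Set.mem_Iic]
        rw [le_div_iff₀ (by positivity), mul_comm]
      rw [hg_def]
      simp only
      rw [hset, expMeasure_Iic' h2, if_pos (by positivity)]
      refine ENNReal.ofReal_le_ofReal ?_
      calc 1 - Real.exp (-(r₂ * (t / x ^ 2))) ≤ r₂ * (t / x ^ 2) := one_sub_exp_neg_le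
        _ = r₂ * t / x ^ 2 := by ring
    calc ∫⁻ x in Ioi a, g x ∂(expMeasure r₁)
        ≤ ∫⁻ x in Ioi a, ENNReal.ofReal (r₂ * t / x ^ 2) ∂(expMeasure r₁) :=
          setLIntegral_mono (by fun_prop) hb
      _ = ∫⁻ x in Ioi a, exponentialPDF r₁ x * ENNReal.ofReal (r₂ * t / x ^ 2) := by
          have hm : Measurable (exponentialPDF r₁) :=
            (measurable_exponentialPDFReal r₁).ennreal_ofReal
          rw [expMeasure_eq', restrict_withDensity measurableSet_Ioi,
            lintegral_withDensity_eq_lintegral_mul _ hm (by fun_prop)]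
          rfl
      _ ≤ ∫⁻ x in Ioi a, ENNReal.ofReal r₁ * ENNReal.ofReal (r₂ * t / x ^ 2) := by
          refine setLIntegral_mono (by fun_prop) fun x _ => ?_
          gcongr
          rw [exponentialPDF_eq]
          refine ENNReal.ofReal_le_ofReal ?_
          split_ifs with h
          · calc r₁ * Real.exp (-(r₁ * x)) ≤ r₁ * 1 := by
                  gcongr; exact Real.exp_le_one_iff.mpr (by nlinarith)
              _ = r₁ := mul_one r₁
          · exact h1.le
      _ = ENNReal.ofReal r₁ * ∫⁻ x in Ioi a, ENNReal.ofReal (r₂ * t / x ^ 2) :=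
          lintegral_const_mul _ (by fun_prop)
      _ = ENNReal.ofReal r₁ * ENNReal.ofReal (r₂ * t / a) := by
          rw [lint_inv_sq ha (by positivity)]
      _ = ENNReal.ofReal (r₁ * a) := by
          rw [← ENNReal.ofReal_mul h1.le]
          congr 1
          rw [← ha2]
          field_simp
  calc ∫⁻ x, g x ∂(expMeasure r₁)
      = ∫⁻ x in Iic a, g x ∂(expMeasure r₁) + ∫⁻ x in (Iic a)ᶜ, g x ∂(expMeasure r₁) :=
        (lintegral_add_compl g measurableSet_Iic).symm
    _ ≤ ENNReal.ofReal (r₁ * a) + ENNReal.ofReal (r₁ * a) := by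
        rw [compl_Iic]; exact add_le_add hupper1 hupper2
    _ = ENNReal.ofReal (2 * (r₁ * a)) := by
        rw [← ENNReal.ofReal_add (by positivity) (by positivity)]; ring_nf

end Helpers

/-- For independent exponential `X` (mean `λ_sr`) and `Y` (mean `λ_rd`) and fixed
`γ_th > 0`, the diversity order in the high-first-hop-SNR regime equals `1/2`:
`lim_{b̂ → ∞} (−log P(b̂·X²·Y ≤ γ_th) / log b̂) = 1/2`. -/
theorem diversity_order_eq_half
    {Ω : Type*} [MeasurableSpace Ω] (P : Measure Ω) [IsProbabilityMeasure P]
    (X Y : Ω → ℝ) (hX : Measurable X) (hY : Measurable Y)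
    (hXY : IndepFun X Y P)
    (lsr lrd : ℝ) (hlsr : 0 < lsr) (hlrd : 0 < lrd)
    (hXd : Measure.map X P = expMeasure lsr⁻¹)
    (hYd : Measure.map Y P = expMeasure lrd⁻¹)
    (γth : ℝ) (hγth : 0 < γth) :
    Tendsto (fun b : ℝ =>
        -Real.log (P {ω | b * X ω ^ 2 * Y ω ≤ γth}).toReal / Real.log b)
      atTop (nhds (1 / 2)) := by
  have hr₁ : 0 < lsr⁻¹ := inv_pos.mpr hlsr
  have hr₂ : 0 < lrd⁻¹ := inv_pos.mpr hlrd
  -- the joint law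
  have hmap : Measure.map (fun ω => (X ω, Y ω)) P
      = (expMeasure lsr⁻¹).prod (expMeasure lrd⁻¹) := by
    rw [← hXd, ← hYd]
    exact (indepFun_iff_map_prod_eq_prod_map_map hX.aemeasurable hY.aemeasurable).mp hXY
  have hPt : ∀ t : ℝ, P {ω | X ω ^ 2 * Y ω ≤ t}
      = (expMeasure lsr⁻¹).prod (expMeasure lrd⁻¹) {p : ℝ × ℝ | p.1 ^ 2 * p.2 ≤ t} := by
    intro t
    rw [← hmap, Measure.map_apply (hX.prodMk hY) (measurableSet_S t)]
    rfl
  -- constants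
  set Cc : ℝ := 2 * (lsr⁻¹ * Real.sqrt lrd⁻¹) with hCc_def
  have hCc : 0 < Cc := by positivity
  set cc : ℝ := Real.exp (-1) * lsr⁻¹ * (1 - Real.exp (-(lrd⁻¹ * 1))) with hcc_def
  have hexp1 : 0 < 1 - Real.exp (-(lrd⁻¹ * 1)) := by
    have h := Real.exp_lt_exp.mpr (show -(lrd⁻¹ * 1) < 0 by nlinarith)
    rw [Real.exp_zero] at h
    linarith
  have hcc : 0 < cc := by
    rw [hcc_def]; positivity
  -- upper bound
  have hup : ∀ t : ℝ, 0 < t →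
      P {ω | X ω ^ 2 * Y ω ≤ t} ≤ ENNReal.ofReal (Cc * Real.sqrt t) := by
    intro t ht
    rw [hPt t]
    refine (prod_upper hr₁ hr₂ ht).trans (le_of_eq ?_)
    rw [hCc_def, Real.sqrt_mul hr₂.le]
    ring_nf
  -- lower bound
  have hlow : ∀ t : ℝ, 0 < t →
      ENNReal.ofReal ((1 - Real.exp (-(lsr⁻¹ * Real.sqrt t))) * (1 - Real.exp (-(lrd⁻¹ * 1))))
        ≤ P {ω | X ω ^ 2 * Y ω ≤ t} := by
    intro t ht
    set s := Real.sqrt t with hs_def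
    have hs : 0 ≤ s := Real.sqrt_nonneg t
    have hsub : X ⁻¹' (Set.Icc 0 s) ∩ Y ⁻¹' (Set.Iic 1) ⊆ {ω | X ω ^ 2 * Y ω ≤ t} := by
      rintro ω ⟨⟨h0x, hxs⟩, hy1⟩
      simp only [Set.mem_setOf_eq]
      have hsq : s ^ 2 = t := Real.sq_sqrt ht.le
      have hx2 : X ω ^ 2 ≤ t := by nlinarith
      simp only [Set.mem_preimage, Set.mem_Iic] at hy1
      rcases le_or_gt (Y ω) 0 with hy | hy
      · nlinarith [sq_nonneg (X ω)]
      · nlinarith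
    have hIcc : ENNReal.ofReal (1 - Real.exp (-(lsr⁻¹ * s))) ≤ expMeasure lsr⁻¹ (Set.Icc 0 s) := by
      have h1 : expMeasure lsr⁻¹ (Set.Iic s) ≤ expMeasure lsr⁻¹ (Set.Icc 0 s) := by
        calc expMeasure lsr⁻¹ (Set.Iic s)
            ≤ expMeasure lsr⁻¹ (Set.Iio 0 ∪ Set.Icc 0 s) := by
              refine measure_mono fun x hx => ?_
              rcases lt_or_ge x 0 with h | h
              · exact Or.inl h
              · exact Or.inr ⟨h, hx⟩
          _ ≤ expMeasure lsr⁻¹ (Set.Iio 0) + expMeasure lsr⁻¹ (Set.Icc 0 s) :=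
              measure_union_le _ _
          _ = expMeasure lsr⁻¹ (Set.Icc 0 s) := by rw [expMeasure_Iio_zero, zero_add]
      rwa [expMeasure_Iic' hr₁ s, if_pos hs] at h1
    have hIic : expMeasure lrd⁻¹ (Set.Iic 1) = ENNReal.ofReal (1 - Real.exp (-(lrd⁻¹ * 1))) := by
      rw [expMeasure_Iic' hr₂ 1, if_pos zero_le_one]
    calc ENNReal.ofReal ((1 - Real.exp (-(lsr⁻¹ * s))) * (1 - Real.exp (-(lrd⁻¹ * 1))))
        = ENNReal.ofReal (1 - Real.exp (-(lsr⁻¹ * s)))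
            * ENNReal.ofReal (1 - Real.exp (-(lrd⁻¹ * 1))) :=
          ENNReal.ofReal_mul (one_sub_exp_neg_nonneg (by positivity))
      _ ≤ expMeasure lsr⁻¹ (Set.Icc 0 s) * expMeasure lrd⁻¹ (Set.Iic 1) :=
          mul_le_mul' hIcc (le_of_eq hIic.symm)
      _ = P (X ⁻¹' Set.Icc 0 s) * P (Y ⁻¹' Set.Iic 1) := by
          rw [← hXd, ← hYd, Measure.map_apply hX measurableSet_Icc,
            Measure.map_apply hY measurableSet_Iic]
      _ = P (X ⁻¹' Set.Icc 0 s ∩ Y ⁻¹' Set.Iic 1) :=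
          (hXY.measure_inter_preimage_eq_mul _ _ measurableSet_Icc measurableSet_Iic).symm
      _ ≤ P {ω | X ω ^ 2 * Y ω ≤ t} := measure_mono hsub
  -- real-valued bounds, eventually in b
  have hmain : ∀ᶠ b : ℝ in atTop,
      1/2 - (Real.log Cc + Real.log γth / 2) / Real.log b
        ≤ -Real.log (P {ω | b * X ω ^ 2 * Y ω ≤ γth}).toReal / Real.log b
      ∧ -Real.log (P {ω | b * X ω ^ 2 * Y ω ≤ γth}).toReal / Real.log b
        ≤ 1/2 - (Real.log cc + Real.log γth / 2) / Real.log b := by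
    filter_upwards [eventually_gt_atTop 1, eventually_ge_atTop (γth / lsr ^ 2)]
      with b hb1 hb2
    have hb0 : 0 < b := lt_trans one_pos hb1
    have hlogb : 0 < Real.log b := Real.log_pos hb1
    set t := γth / b with ht_def
    have ht : 0 < t := by positivity
    have hevent : {ω | b * X ω ^ 2 * Y ω ≤ γth} = {ω | X ω ^ 2 * Y ω ≤ t} := by
      ext ω
      simp only [Set.mem_setOf_eq]
      rw [ht_def, le_div_iff₀ hb0]
      constructor <;> intro h <;> nlinarith
    set q := (P {ω | b * X ω ^ 2 * Y ω ≤ γth}).toReal with hq_def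
    have hst : Real.sqrt t > 0 := Real.sqrt_pos.mpr ht
    -- s ≤ 1 condition
    have hs1 : lsr⁻¹ * Real.sqrt t ≤ 1 := by
      have h1 : t ≤ lsr ^ 2 := by
        rw [ht_def, div_le_iff₀ hb0]
        nlinarith [(div_le_iff₀ (show (0:ℝ) < lsr ^ 2 by positivity)).mp hb2]
      have h2 : Real.sqrt t ≤ lsr := by
        calc Real.sqrt t ≤ Real.sqrt (lsr ^ 2) := Real.sqrt_le_sqrt h1
          _ = lsr := by rw [Real.sqrt_sq hlsr.le]
      calc lsr⁻¹ * Real.sqrt t ≤ lsr⁻¹ * lsr := by gcongr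
        _ = 1 := inv_mul_cancel₀ hlsr.ne'
    -- upper real bound on q
    have hqU : q ≤ Cc * Real.sqrt t := by
      rw [hq_def, hevent]
      exact ENNReal.toReal_le_of_le_ofReal (by positivity) (hup t ht)
    -- lower real bound on q
    have hqL : cc * Real.sqrt t ≤ q := by
      have h1 : cc * Real.sqrt t
          ≤ (1 - Real.exp (-(lsr⁻¹ * Real.sqrt t))) * (1 - Real.exp (-(lrd⁻¹ * 1))) := by
        rw [hcc_def]
        have := le_one_sub_exp_neg (by positivity) hs1
        nlinarith [hexp1]
      rw [hq_def, hevent, ← ENNReal.ofReal_le_iff_le_toReal (measure_ne_top _ _)]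
      exact le_trans (ENNReal.ofReal_le_ofReal h1) (hlow t ht)
    have hqpos : 0 < q := lt_of_lt_of_le (by positivity) hqL
    have hlogt : Real.log t = Real.log γth - Real.log b := Real.log_div hγth.ne' hb0.ne'
    have hlogsqrt : Real.log (Real.sqrt t) = Real.log t / 2 := Real.log_sqrt ht.le
    constructor
    · -- from upper bound on q
      have hlogU : Real.log q ≤ Real.log Cc + (Real.log γth - Real.log b) / 2 := by
        calc Real.log q ≤ Real.log (Cc * Real.sqrt t) := Real.log_le_log hqpos hqU
          _ = Real.log Cc + Real.log (Real.sqrt t) := Real.log_mul hCc.ne' hst.ne'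
          _ = Real.log Cc + (Real.log γth - Real.log b) / 2 := by rw [hlogsqrt, hlogt]
      have heq : 1/2 - (Real.log Cc + Real.log γth / 2) / Real.log b
          = (Real.log b / 2 - (Real.log Cc + Real.log γth / 2)) / Real.log b := by
        field_simp
      rw [heq]
      exact (div_le_div_iff_of_pos_right hlogb).mpr (by linarith)
    · have hlogL : Real.log cc + (Real.log γth - Real.log b) / 2 ≤ Real.log q := by
        calc Real.log cc + (Real.log γth - Real.log b) / 2
            = Real.log (cc * Real.sqrt t) := by
              rw [Real.log_mul hcc.ne' hst.ne', hlogsqrt, hlogt]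
          _ ≤ Real.log q := Real.log_le_log (by positivity) hqL
      have heq : 1/2 - (Real.log cc + Real.log γth / 2) / Real.log b
          = (Real.log b / 2 - (Real.log cc + Real.log γth / 2)) / Real.log b := by
        field_simp
      rw [heq]
      exact (div_le_div_iff_of_pos_right hlogb).mpr (by linarith)
  -- squeeze
  have hK : ∀ K : ℝ, Tendsto (fun b : ℝ => 1/2 - K / Real.log b) atTop (nhds (1/2)) := by
    intro K
    have h0 : Tendsto (fun b : ℝ => K / Real.log b) atTop (nhds 0) := by
      have := (Real.tendsto_log_atTop.inv_tendsto_atTop).const_mul (b := K)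
      simpa [div_eq_mul_inv, Function.comp] using this
    simpa using tendsto_const_nhds.sub h0
  exact tendsto_of_tendsto_of_tendsto_of_le_of_le' (hK _) (hK _)
    (hmain.mono fun b h => h.1) (hmain.mono fun b h => h.2)
end

section
/- Let X and Y be independent random variables, X exponentially distributed with mean λ_sr > 0 and Y exponentially distributed with mean λ_rd > 0, let â > 0, b̂ > 0, Ψ ≥ 1, and set γ_eq = â·b̂·X²·Y / (b̂·X·Y + â + Ψ) and μ_n = E[γ_eq^n]. Then for every real s with |s| < 1/(â·λ_sr), the series ∑_{n=0}^∞ ((−1)^n / n!) · μ_n · s^n converges absolutely and its sum equals the MGF value E[ e^{−s·γ_eq} ]. -/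
open MeasureTheory ProbabilityTheory Real
open Set
open scoped ENNReal NNReal


lemma expPDFReal_eq' (r x : ℝ) :
    exponentialPDFReal r x = if 0 ≤ x then r * Real.exp (-(r * x)) else 0 := by
  rw [exponentialPDFReal, gammaPDFReal]
  simp only [rpow_one, Real.Gamma_one, div_one, sub_self, Real.rpow_zero, mul_one]

lemma expMeasure_ae_nonneg {r : ℝ} : ∀ᵐ x ∂(expMeasure r), 0 ≤ x := by
  rw [ae_iff]
  have h : {x : ℝ | ¬ 0 ≤ x} = Iio 0 := by ext x; simp
  rw [h, expMeasure, gammaMeasure, withDensity_apply _ measurableSet_Iio]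
  exact lintegral_gammaPDF_of_nonpos le_rfl

lemma exp_aux_integrableOn {r : ℝ} (hr : 0 < r) (n : ℕ) :
    IntegrableOn (fun x : ℝ => r * Real.exp (-(r * x)) * x ^ n) (Ici 0) := by
  rw [integrableOn_Ici_iff_integrableOn_Ioi]
  have h := (integrableOn_rpow_mul_exp_neg_mul_rpow (p := 1) (s := n) (b := r)
    (by exact_mod_cast neg_one_lt_zero.trans_le n.cast_nonneg) one_pos hr).const_mul r
  refine IntegrableOn.congr_fun h (fun x hx => ?_) measurableSet_Ioi
  rw [Real.rpow_one, Real.rpow_natCast]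
  ring_nf

lemma expMeasure_eq_withDensity (r : ℝ) :
    expMeasure r = MeasureTheory.volume.withDensity
      (fun x => ((exponentialPDFReal r x).toNNReal : ℝ≥0∞)) := by
  rw [expMeasure, gammaMeasure]
  rfl

lemma exp_pdf_mul_pow_eq {r : ℝ} (n : ℕ) :
    (fun x : ℝ => exponentialPDFReal r x * x ^ n)
      = (Ici (0:ℝ)).indicator (fun x => r * Real.exp (-(r * x)) * x ^ n) := by
  funext x
  rw [expPDFReal_eq', Set.indicator_apply]
  simp only [mem_Ici]
  split_ifs <;> simp

lemma exp_moment_integrable {r : ℝ} (hr : 0 < r) (n : ℕ) :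
    Integrable (fun x : ℝ => x ^ n) (expMeasure r) := by
  rw [expMeasure_eq_withDensity,
    integrable_withDensity_iff_integrable_smul
      ((measurable_exponentialPDFReal r).real_toNNReal)]
  have : (fun x : ℝ => (exponentialPDFReal r x).toNNReal • x ^ n)
      = (Ici (0:ℝ)).indicator (fun x => r * Real.exp (-(r * x)) * x ^ n) := by
    rw [← exp_pdf_mul_pow_eq]
    funext x
    rw [NNReal.smul_def, Real.coe_toNNReal _ (exponentialPDFReal_nonneg hr x), smul_eq_mul]
  rw [this, integrable_indicator_iff measurableSet_Ici]
  exact exp_aux_integrableOn hr n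

lemma exp_moment_eq {r : ℝ} (hr : 0 < r) (n : ℕ) :
    ∫ x, x ^ n ∂(expMeasure r) = n.factorial / r ^ n := by
  rw [expMeasure_eq_withDensity,
    integral_withDensity_eq_integral_smul ((measurable_exponentialPDFReal r).real_toNNReal)]
  have h1 : (fun x : ℝ => (exponentialPDFReal r x).toNNReal • x ^ n)
      = (Ici (0:ℝ)).indicator (fun x => r * Real.exp (-(r * x)) * x ^ n) := by
    rw [← exp_pdf_mul_pow_eq]
    funext x
    rw [NNReal.smul_def, Real.coe_toNNReal _ (exponentialPDFReal_nonneg hr x), smul_eq_mul]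
  rw [h1, integral_indicator measurableSet_Ici, integral_Ici_eq_integral_Ioi]
  have h2 : EqOn (fun x : ℝ => r * Real.exp (-(r * x)) * x ^ n)
      (fun x : ℝ => r * (x ^ ((n:ℝ) + 1 - 1) * Real.exp (-(r * x)))) (Ioi 0) := by
    intro x hx
    simp only
    rw [add_sub_cancel_right, Real.rpow_natCast]
    ring
  rw [setIntegral_congr_fun measurableSet_Ioi h2, integral_const_mul,
    integral_rpow_mul_exp_neg_mul_Ioi (by positivity) hr]
  have h3 : ((n:ℝ) + 1) = ((n + 1 : ℕ) : ℝ) := by push_cast; ring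
  rw [h3, Real.rpow_natCast, ← h3, Real.Gamma_nat_eq_factorial]
  field_simp
  ring_nf
  rw [mul_right_comm r, mul_inv_cancel₀ hr.ne', one_mul, ← mul_pow, mul_inv_cancel₀ hr.ne',
    one_pow]



/-- For independent exponential `X` (mean `λ_sr`) and `Y` (mean `λ_rd`), `â > 0`,
`b̂ > 0`, `Ψ ≥ 1`, `γ_eq = â·b̂·X²·Y/(b̂·X·Y + â + Ψ)`, and `μ_n = E[γ_eq^n]`: for every real
`s` with `|s| < 1/(â·λ_sr)`, the series `∑ ((−1)^n/n!)·μ_n·s^n` converges absolutely and its sum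
equals `E[e^{−s·γ_eq}]`. -/
theorem mgf_power_series
    {Ω : Type*} [MeasurableSpace Ω] (P : Measure Ω) [IsProbabilityMeasure P]
    (X Y : Ω → ℝ) (hX : Measurable X) (hY : Measurable Y)
    (hXY : IndepFun X Y P)
    (lsr lrd : ℝ) (hlsr : 0 < lsr) (hlrd : 0 < lrd)
    (hXd : Measure.map X P = expMeasure lsr⁻¹)
    (hYd : Measure.map Y P = expMeasure lrd⁻¹)
    (a b Ψ : ℝ) (ha : 0 < a) (hb : 0 < b) (hΨ : 1 ≤ Ψ)
    (γeq : Ω → ℝ)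
    (hγeq : ∀ ω, γeq ω = a * b * X ω ^ 2 * Y ω / (b * X ω * Y ω + a + Ψ))
    (μ : ℕ → ℝ) (hμ : ∀ n : ℕ, μ n = ∫ ω, γeq ω ^ n ∂P)
    (s : ℝ) (hs : |s| < 1 / (a * lsr)) :
    (Summable fun n : ℕ => |((-1 : ℝ) ^ n / n.factorial) * μ n * s ^ n|) ∧
      ∑' n : ℕ, ((-1 : ℝ) ^ n / n.factorial) * μ n * s ^ n =
        ∫ ω, Real.exp (-(s * γeq ω)) ∂P := by
  have hr : 0 < lsr⁻¹ := inv_pos.mpr hlsr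
  -- a.e. nonnegativity of X and Y
  have hX0 : ∀ᵐ ω ∂P, 0 ≤ X ω := by
    have h := expMeasure_ae_nonneg (r := lsr⁻¹)
    rw [← hXd, ae_map_iff hX.aemeasurable measurableSet_Ici] at h
    exact h
  have hY0 : ∀ᵐ ω ∂P, 0 ≤ Y ω := by
    have h := expMeasure_ae_nonneg (r := lrd⁻¹)
    rw [← hYd, ae_map_iff hY.aemeasurable measurableSet_Ici] at h
    exact h
  -- measurability of γeq
  have hγm : Measurable γeq := by
    have h : γeq = fun ω => a * b * X ω ^ 2 * Y ω / (b * X ω * Y ω + a + Ψ) := funext hγeq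
    rw [h]
    exact Measurable.div (by measurability) (by measurability)
  -- a.e. bounds on γeq
  have hγ_bd : ∀ᵐ ω ∂P, 0 ≤ γeq ω ∧ γeq ω ≤ a * X ω := by
    filter_upwards [hX0, hY0] with ω hx hy
    rw [hγeq ω]
    have hxy : 0 ≤ b * X ω * Y ω := mul_nonneg (mul_nonneg hb.le hx) hy
    have hD : 0 < b * X ω * Y ω + a + Ψ := by linarith
    constructor
    · exact div_nonneg (by positivity) hD.le
    · rw [div_le_iff₀ hD]
      nlinarith [mul_nonneg (mul_nonneg ha.le hx) (by linarith : (0:ℝ) ≤ a + Ψ)]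
  -- moments of X
  have hXn_int : ∀ n : ℕ, Integrable (fun ω => X ω ^ n) P := by
    intro n
    have h := exp_moment_integrable hr n
    rw [← hXd] at h
    exact (integrable_map_measure (measurable_id.pow_const n).aestronglyMeasurable
      hX.aemeasurable).mp h
  have hXn_val : ∀ n : ℕ, ∫ ω, X ω ^ n ∂P = n.factorial * lsr ^ n := by
    intro n
    have h := exp_moment_eq hr n
    rw [← hXd, integral_map hX.aemeasurable
      (measurable_id'.pow_const n).aestronglyMeasurable] at h
    rw [h, inv_pow, div_inv_eq_mul]
  -- integrability of powers of γeq
  have hγn_int : ∀ n : ℕ, Integrable (fun ω => γeq ω ^ n) P := by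
    intro n
    refine Integrable.mono' ((hXn_int n).const_mul (a ^ n))
      ((hγm.pow_const n).aestronglyMeasurable) ?_
    filter_upwards [hγ_bd] with ω h
    rw [Real.norm_eq_abs, abs_of_nonneg (pow_nonneg h.1 n)]
    calc γeq ω ^ n ≤ (a * X ω) ^ n := pow_le_pow_left₀ h.1 h.2 n
    _ = a ^ n * X ω ^ n := mul_pow _ _ _
  set c : ℕ → ℝ := fun n => (-1) ^ n / n.factorial * s ^ n with hc
  set q : ℝ := a * lsr * |s| with hq
  have hq0 : 0 ≤ q := by positivity
  have hq1 : q < 1 := by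
    have h1 : 0 < a * lsr := by positivity
    calc q = a * lsr * |s| := hq
    _ < a * lsr * (1 / (a * lsr)) := by exact mul_lt_mul_of_pos_left hs h1
    _ = 1 := by field_simp
  -- nonnegativity and bound of μ
  have hμ0 : ∀ n : ℕ, 0 ≤ μ n := by
    intro n
    rw [hμ n]
    exact integral_nonneg_of_ae (by filter_upwards [hγ_bd] with ω h using pow_nonneg h.1 n)
  have hμb : ∀ n : ℕ, μ n ≤ a ^ n * (n.factorial * lsr ^ n) := by
    intro n
    rw [hμ n]
    calc ∫ ω, γeq ω ^ n ∂P ≤ ∫ ω, a ^ n * X ω ^ n ∂P := by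
          refine integral_mono_ae (hγn_int n) ((hXn_int n).const_mul _) ?_
          filter_upwards [hγ_bd] with ω h
          calc γeq ω ^ n ≤ (a * X ω) ^ n := pow_le_pow_left₀ h.1 h.2 n
          _ = a ^ n * X ω ^ n := mul_pow _ _ _
    _ = a ^ n * (n.factorial * lsr ^ n) := by rw [integral_const_mul, hXn_val n]
  have hcabs : ∀ n : ℕ, |c n| = |s| ^ n / n.factorial := by
    intro n
    rw [hc]
    simp [abs_mul, abs_div, abs_pow, abs_of_nonneg (Nat.cast_nonneg (α := ℝ) n.factorial)]
    rw [div_eq_mul_inv, mul_comm]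
  have hkey : ∀ n : ℕ, |c n| * μ n ≤ q ^ n := by
    intro n
    have hfac : (0:ℝ) < n.factorial := by exact_mod_cast n.factorial_pos
    calc |c n| * μ n ≤ (|s| ^ n / n.factorial) * (a ^ n * (n.factorial * lsr ^ n)) := by
          rw [hcabs n]
          exact mul_le_mul_of_nonneg_left (hμb n) (by positivity)
    _ = q ^ n := by
          rw [hq, mul_pow, mul_pow]
          field_simp
  -- summability of the series of absolute values
  have habs : ∀ n : ℕ, |((-1 : ℝ) ^ n / n.factorial) * μ n * s ^ n| = |c n| * μ n := by
    intro n
    have h1 : ((-1 : ℝ) ^ n / n.factorial) * μ n * s ^ n = c n * μ n := by rw [hc]; ring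
    rw [h1, abs_mul, abs_of_nonneg (hμ0 n)]
  have hsummable : Summable fun n : ℕ => |((-1 : ℝ) ^ n / n.factorial) * μ n * s ^ n| := by
    refine Summable.of_nonneg_of_le (fun n => abs_nonneg _) (fun n => ?_)
      (summable_geometric_of_lt_one hq0 hq1)
    rw [habs n]
    exact hkey n
  refine ⟨hsummable, ?_⟩
  -- integrability of the terms
  have hfn_int : ∀ n : ℕ, Integrable (fun ω => c n * γeq ω ^ n) P :=
    fun n => (hγn_int n).const_mul _
  have hnorm_sum : Summable fun n : ℕ => ∫ ω, ‖c n * γeq ω ^ n‖ ∂P := by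
    refine Summable.of_nonneg_of_le (fun n => integral_nonneg fun ω => norm_nonneg _)
      (fun n => ?_) (summable_geometric_of_lt_one hq0 hq1)
    have h1 : ∫ ω, ‖c n * γeq ω ^ n‖ ∂P = |c n| * μ n := by
      rw [hμ n, ← integral_const_mul]
      refine integral_congr_ae ?_
      filter_upwards [hγ_bd] with ω h
      rw [Real.norm_eq_abs, abs_mul, abs_of_nonneg (pow_nonneg h.1 n)]
    rw [h1]
    exact hkey n
  have hexp : ∀ x : ℝ, Real.exp (-(s * x)) = ∑' n : ℕ, c n * x ^ n := by
    intro x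
    rw [Real.exp_eq_exp_ℝ, NormedSpace.exp_eq_tsum_div]
    refine tsum_congr fun n => ?_
    rw [hc, neg_pow, mul_pow]
    ring
  calc ∑' n : ℕ, ((-1 : ℝ) ^ n / n.factorial) * μ n * s ^ n
      = ∑' n : ℕ, ∫ ω, c n * γeq ω ^ n ∂P := by
        refine tsum_congr fun n => ?_
        rw [integral_const_mul, ← hμ n, hc]
        ring
  _ = ∫ ω, ∑' n : ℕ, c n * γeq ω ^ n ∂P :=
        integral_tsum_of_summable_integral_norm hfn_int hnorm_sum
  _ = ∫ ω, Real.exp (-(s * γeq ω)) ∂P := by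
        refine integral_congr_ae (Filter.Eventually.of_forall fun ω => ?_)
        exact (hexp (γeq ω)).symm
end

section
/- As c → ∞, the integral ∫₀^∞ e^{−x} / (1 + c·x²) dx is asymptotically equivalent to π/(2·√c); that is, √c · ∫₀^∞ e^{−x}/(1 + c·x²) dx tends to π/2 as c → ∞. -/
open MeasureTheory Real Filter

/-- As `c → ∞`, `∫₀^∞ e^{−x}/(1 + c·x²) dx` is asymptotically equivalent to
`π/(2·√c)`; that is, `√c · ∫₀^∞ e^{−x}/(1 + c·x²) dx → π/2` as `c → ∞`. -/
theorem integral_exp_div_one_add_sq_asymptotic :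
    Tendsto (fun c : ℝ =>
        Real.sqrt c * ∫ x in Set.Ioi (0 : ℝ), Real.exp (-x) / (1 + c * x ^ 2))
      atTop (nhds (π / 2)) := by
  -- Step 1: change of variables `u = √c · x` for `c > 0`
  have key : ∀ᶠ c : ℝ in atTop,
      Real.sqrt c * ∫ x in Set.Ioi (0 : ℝ), Real.exp (-x) / (1 + c * x ^ 2)
        = ∫ u in Set.Ioi (0 : ℝ), Real.exp (-(u / Real.sqrt c)) / (1 + u ^ 2) := by
    filter_upwards [eventually_gt_atTop (0 : ℝ)] with c hc
    have hs : (0 : ℝ) < Real.sqrt c := Real.sqrt_pos.mpr hc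
    have h := MeasureTheory.integral_comp_mul_left_Ioi
      (fun u => Real.exp (-(u / Real.sqrt c)) / (1 + u ^ 2)) 0 hs
    simp only [mul_zero, smul_eq_mul] at h
    have heq : ∀ x : ℝ,
        Real.exp (-(Real.sqrt c * x / Real.sqrt c)) / (1 + (Real.sqrt c * x) ^ 2)
          = Real.exp (-x) / (1 + c * x ^ 2) := by
      intro x
      rw [mul_div_cancel_left₀ _ hs.ne', mul_pow, Real.sq_sqrt hc.le]
    simp only [heq] at h
    rw [h, ← mul_assoc, mul_inv_cancel₀ hs.ne', one_mul]
  -- Step 2: dominated convergence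
  have lim : Tendsto (fun c : ℝ =>
      ∫ u in Set.Ioi (0 : ℝ), Real.exp (-(u / Real.sqrt c)) / (1 + u ^ 2))
      atTop (nhds (π / 2)) := by
    have hpi : (π / 2 : ℝ) = ∫ u in Set.Ioi (0 : ℝ), (1 + u ^ 2)⁻¹ := by
      rw [integral_Ioi_inv_one_add_sq, Real.arctan_zero, sub_zero]
    rw [hpi]
    apply MeasureTheory.tendsto_integral_filter_of_dominated_convergence
      (fun u => (1 + u ^ 2)⁻¹)
    · filter_upwards with c
      apply Continuous.aestronglyMeasurable
      exact (Real.continuous_exp.comp (continuous_id.div_const _).neg).div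
        (continuous_const.add (continuous_pow 2)) (fun u => by positivity)
    · filter_upwards with c
      filter_upwards [ae_restrict_mem measurableSet_Ioi] with u hu
      have h1 : (0 : ℝ) < 1 + u ^ 2 := by positivity
      rw [Real.norm_eq_abs, abs_div, abs_of_pos (Real.exp_pos _), abs_of_pos h1]
      rw [div_le_iff₀ h1, inv_mul_cancel₀ h1.ne']
      have : u / Real.sqrt c ≥ 0 := by
        apply div_nonneg (le_of_lt hu) (Real.sqrt_nonneg c)
      calc Real.exp (-(u / Real.sqrt c)) ≤ Real.exp 0 :=
            Real.exp_le_exp.mpr (by linarith)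
        _ = 1 := Real.exp_zero
    · exact integrable_inv_one_add_sq.integrableOn
    · filter_upwards with u
      have hsqrt : Tendsto Real.sqrt atTop atTop := by
        apply (tendsto_rpow_atTop (by norm_num : (0:ℝ) < 1/2)).congr'
        filter_upwards [eventually_ge_atTop (0:ℝ)] with x hx
        exact (Real.sqrt_eq_rpow x).symm
      have h1 : Tendsto (fun c : ℝ => u / Real.sqrt c) atTop (nhds 0) :=
        Tendsto.div_atTop tendsto_const_nhds hsqrt
      have h2 : Tendsto (fun c : ℝ => Real.exp (-(u / Real.sqrt c))) atTop (nhds 1) := by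
        have := (Real.continuous_exp.tendsto 0).comp (by simpa using h1.neg :
          Tendsto (fun c : ℝ => -(u / Real.sqrt c)) atTop (nhds 0))
        simpa [Function.comp_def] using this
      have h3 := h2.div_const (1 + u ^ 2)
      simpa [one_div] using h3
  exact lim.congr' (key.mono fun c hc => hc.symm)
end
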